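/- Let $\mathcal{D}$ be a Cartan datum of type $A_n$ over a finite abelian group $\Gamma$ and $\mu \in k^{\Phi^+}$ arbitrary. Then there is exactly one family $\mu' \in k^{\Phi^+}$ with $\mu'_{ij} = 0$ whenever $g_{ij}^N = 1$ (condition (R1)) such that $u_{ij}(\mu) = u_{ij}(\mu')$ in $k[\Gamma]$ for all $1 \leq i < j \leq n+1$. Moreover if $\mu$ satisfies (R2) then so does $\mu'$. -/

import Mathlib

/-- The elements `u_{ij}(μ)` of the group algebra `k[Γ]`, defined inductively by
`u_{ij}(μ) = μ_{ij}(1 - g_{ij}^N) + ∑_{i<p<j} (q-1)^N μ_{ip} u_{pj}(μ)`. -/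
noncomputable def uElt {k : Type*} [Field k] {Γ : Type*} [CommGroup Γ]
    (g : ℕ → Γ) (q : k) (N : ℕ) (μ : ℕ → ℕ → k) : ℕ → ℕ → MonoidAlgebra k Γ
  | i, j =>
    μ i j • ((1 : MonoidAlgebra k Γ)
        - MonoidAlgebra.of k Γ ((∏ t ∈ Finset.Ico i j, g t) ^ N))
      + ∑ p ∈ (Finset.Ioo i j).attach,
          ((q - 1) ^ N * μ i ↑p) • uElt g q N μ ↑p j
  termination_by i j => j - i
  decreasing_by
    have := Finset.mem_Ioo.mp p.2
    omega

open Finset MonoidAlgebra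

attribute [local instance] Classical.propDecidable

section Aux

variable {k : Type*} [Field k] {Γ : Type*} [CommGroup Γ]

noncomputable def nuF (g : ℕ → Γ) (q : k) (N : ℕ) (μ : ℕ → ℕ → k) : ℕ → ℕ → k
  | i, j => μ i j + ∑ p ∈ (Finset.Ioo i j).attach,
      (if (∏ t ∈ Finset.Ico i ↑p, g t) ^ N = 1
        then (q - 1) ^ N * μ i ↑p * nuF g q N μ ↑p j else 0)
  termination_by i j => j - i
  decreasing_by
    have := Finset.mem_Ioo.mp p.2
    omega

lemma uElt_def (g : ℕ → Γ) (q : k) (N : ℕ) (μ : ℕ → ℕ → k) (i j : ℕ) :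
    uElt g q N μ i j
      = μ i j • ((1 : MonoidAlgebra k Γ)
          - MonoidAlgebra.of k Γ ((∏ t ∈ Finset.Ico i j, g t) ^ N))
        + ∑ p ∈ Finset.Ioo i j, ((q - 1) ^ N * μ i p) • uElt g q N μ p j := by
  rw [uElt]
  congr 1
  exact Finset.sum_attach (Finset.Ioo i j)
    (fun p => ((q - 1) ^ N * μ i p) • uElt g q N μ p j)

lemma nuF_def (g : ℕ → Γ) (q : k) (N : ℕ) (μ : ℕ → ℕ → k) (i j : ℕ) :
    nuF g q N μ i j
      = μ i j + ∑ p ∈ Finset.Ioo i j,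
          (if (∏ t ∈ Finset.Ico i p, g t) ^ N = 1
            then (q - 1) ^ N * μ i p * nuF g q N μ p j else 0) := by
  rw [nuF]
  congr 1
  exact Finset.sum_attach (Finset.Ioo i j)
    (fun p => if (∏ t ∈ Finset.Ico i p, g t) ^ N = 1
      then (q - 1) ^ N * μ i p * nuF g q N μ p j else 0)

lemma Gmul (g : ℕ → Γ) (N : ℕ) {a b c : ℕ} (hab : a ≤ b) (hbc : b ≤ c) :
    (∏ t ∈ Finset.Ico a c, g t) ^ N
      = (∏ t ∈ Finset.Ico a b, g t) ^ N * (∏ t ∈ Finset.Ico b c, g t) ^ N := by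
  rw [← Finset.prod_Ico_consecutive _ hab hbc, mul_pow]

lemma star (g : ℕ → Γ) (q : k) (N : ℕ) (μ : ℕ → ℕ → k) :
    ∀ d i j, i < j → j - i ≤ d →
    uElt g q N μ i j
      = nuF g q N μ i j • ((1 : MonoidAlgebra k Γ)
          - MonoidAlgebra.of k Γ ((∏ t ∈ Finset.Ico i j, g t) ^ N))
        + ∑ p ∈ Finset.Ioo i j, (if (∏ t ∈ Finset.Ico i p, g t) ^ N = 1 then 0
            else ((q - 1) ^ N * nuF g q N μ i p) • uElt g q N μ p j) := by
  intro d
  induction d with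
  | zero => intro i j h1 h2; omega
  | succ d ih =>
    intro i j hij hd
    set L : k := (q - 1) ^ N with hL
    set X : MonoidAlgebra k Γ :=
      (1 : MonoidAlgebra k Γ)
        - MonoidAlgebra.of k Γ ((∏ t ∈ Finset.Ico i j, g t) ^ N) with hX
    -- the canonical double-sum term
    set T : ℕ → ℕ → MonoidAlgebra k Γ := fun r p =>
      if (r < p ∧ (∏ t ∈ Finset.Ico i r, g t) ^ N = 1
          ∧ ¬ (∏ t ∈ Finset.Ico r p, g t) ^ N = 1)
        then (L * (L * μ i r * nuF g q N μ r p)) • uElt g q N μ p j else 0 with hT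
    rw [uElt_def, nuF_def, add_smul, Finset.sum_smul, add_assoc]
    congr 1
    -- key termwise identity
    have key : ∀ p ∈ Finset.Ioo i j,
        (if (∏ t ∈ Finset.Ico i p, g t) ^ N = 1
            then L * μ i p * nuF g q N μ p j else 0) • X
          + (if (∏ t ∈ Finset.Ico i p, g t) ^ N = 1 then 0
              else (L * nuF g q N μ i p) • uElt g q N μ p j)
        = (L * μ i p) • uElt g q N μ p j
          + ((∑ r ∈ Finset.Ioo i j, T r p) - (∑ r ∈ Finset.Ioo i j, T p r)) := by
      intro p hp
      obtain ⟨hip, hpj⟩ := Finset.mem_Ioo.mp hp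
      by_cases hG : (∏ t ∈ Finset.Ico i p, g t) ^ N = 1
      · -- case g_{ip}^N = 1
        rw [if_pos hG, if_pos hG, add_zero]
        -- ∑_r T r p = 0
        have hTl : (∑ r ∈ Finset.Ioo i j, T r p) = 0 := by
          apply Finset.sum_eq_zero
          intro r hr
          rw [hT]
          simp only
          rw [if_neg]
          rintro ⟨hrp, h1, h2⟩
          exact h2 (by
            have := Gmul g N (le_of_lt (Finset.mem_Ioo.mp hr).1) (le_of_lt hrp)
            rw [h1, one_mul] at this
            rw [← this]; exact hG)
        rw [hTl, zero_sub]
        -- use the inductive hypothesis for (p, j)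
        have hGeq : (∏ t ∈ Finset.Ico p j, g t) ^ N
            = (∏ t ∈ Finset.Ico i j, g t) ^ N := by
          have := Gmul g N (le_of_lt hip) (le_of_lt hpj)
          rw [this, hG, one_mul]
        have hIH := ih p j hpj (by omega)
        -- rewrite u p j
        have hXpj : X = (1 : MonoidAlgebra k Γ)
            - MonoidAlgebra.of k Γ ((∏ t ∈ Finset.Ico p j, g t) ^ N) := by
          rw [hX, hGeq]
        rw [hIH, hXpj]
        rw [smul_add]
        have h1 : (L * μ i p * nuF g q N μ p j) •
            ((1 : MonoidAlgebra k Γ)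
              - MonoidAlgebra.of k Γ ((∏ t ∈ Finset.Ico p j, g t) ^ N))
            = (L * μ i p) • (nuF g q N μ p j •
              ((1 : MonoidAlgebra k Γ)
                - MonoidAlgebra.of k Γ ((∏ t ∈ Finset.Ico p j, g t) ^ N))) := by
          rw [smul_smul]
        rw [h1]
        -- now show -(L μ ip) • (∑ ite) = - ∑ T p r
        have h2 : (L * μ i p) • (∑ r ∈ Finset.Ioo p j,
              (if (∏ t ∈ Finset.Ico p r, g t) ^ N = 1 then 0
                else (L * nuF g q N μ p r) • uElt g q N μ r j))
            = ∑ r ∈ Finset.Ioo i j, T p r := by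
          rw [Finset.smul_sum]
          rw [← Finset.sum_subset (Finset.Ioo_subset_Ioo (le_of_lt hip) le_rfl :
            Finset.Ioo p j ⊆ Finset.Ioo i j)]
          · apply Finset.sum_congr rfl
            intro r hr
            obtain ⟨hpr, hrj⟩ := Finset.mem_Ioo.mp hr
            rw [hT]
            simp only
            by_cases hpr1 : (∏ t ∈ Finset.Ico p r, g t) ^ N = 1
            · rw [if_pos hpr1, if_neg (by rintro ⟨_, _, h⟩; exact h hpr1), smul_zero]
            · rw [if_neg hpr1, if_pos ⟨hpr, hG, hpr1⟩, smul_smul]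
              congr 1
              ring
          · intro r hr hnr
            rw [hT]
            simp only
            rw [if_neg]
            rintro ⟨hpr, _, _⟩
            exact hnr (Finset.mem_Ioo.mpr ⟨hpr, (Finset.mem_Ioo.mp hr).2⟩)
        rw [← h2]
        abel
      · -- case g_{ip}^N ≠ 1
        rw [if_neg hG, if_neg hG, zero_smul, zero_add]
        -- ∑_r T p r = 0
        have hTr : (∑ r ∈ Finset.Ioo i j, T p r) = 0 := by
          apply Finset.sum_eq_zero
          intro r hr
          rw [hT]
          simp only
          rw [if_neg]
          rintro ⟨_, h1, _⟩
          exact hG h1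
        rw [hTr, sub_zero]
        -- expand nuF i p
        rw [nuF_def g q N μ i p, mul_add, add_smul]
        congr 1
        rw [Finset.mul_sum, Finset.sum_smul]
        rw [← Finset.sum_subset (Finset.Ioo_subset_Ioo le_rfl (le_of_lt hpj) :
          Finset.Ioo i p ⊆ Finset.Ioo i j)]
        · apply Finset.sum_congr rfl
          intro r hr
          obtain ⟨hir, hrp⟩ := Finset.mem_Ioo.mp hr
          rw [hT]
          simp only
          by_cases hir1 : (∏ t ∈ Finset.Ico i r, g t) ^ N = 1
          · rw [if_pos hir1, if_pos ⟨hrp, hir1, by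
              intro hrp1
              apply hG
              rw [Gmul g N (le_of_lt hir) (le_of_lt hrp), hir1, hrp1, one_mul]⟩]
          · rw [if_neg hir1, mul_zero, zero_smul,
              if_neg (by rintro ⟨_, h1, _⟩; exact hir1 h1)]
        · intro r hr hnr
          rw [hT]
          simp only
          rw [if_neg]
          rintro ⟨hrp, _, _⟩
          exact hnr (Finset.mem_Ioo.mpr ⟨(Finset.mem_Ioo.mp hr).1, hrp⟩)
    calc ∑ p ∈ Finset.Ioo i j, (L * μ i p) • uElt g q N μ p j
        = ∑ p ∈ Finset.Ioo i j, ((L * μ i p) • uElt g q N μ p j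
            + ((∑ r ∈ Finset.Ioo i j, T r p) - (∑ r ∈ Finset.Ioo i j, T p r))) := by
          rw [Finset.sum_add_distrib, Finset.sum_sub_distrib]
          rw [Finset.sum_comm (s := Finset.Ioo i j) (t := Finset.Ioo i j)
            (f := fun p r => T r p)]
          simp
      _ = ∑ p ∈ Finset.Ioo i j,
            ((if (∏ t ∈ Finset.Ico i p, g t) ^ N = 1
                then L * μ i p * nuF g q N μ p j else 0) • X
              + (if (∏ t ∈ Finset.Ico i p, g t) ^ N = 1 then 0
                  else (L * nuF g q N μ i p) • uElt g q N μ p j)) := by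
          apply Finset.sum_congr rfl
          intro p hp
          rw [key p hp]
      _ = _ := by rw [Finset.sum_add_distrib]

lemma one_sub_of_ne {h : Γ} (hh : h ≠ 1) :
    (1 : MonoidAlgebra k Γ) - MonoidAlgebra.of k Γ h ≠ 0 := by
  intro e
  have e2 : MonoidAlgebra.of k Γ 1 = MonoidAlgebra.of k Γ h := by
    rw [map_one]; exact sub_eq_zero.mp e
  exact hh (MonoidAlgebra.of_injective e2).symm

lemma u_eq (g : ℕ → Γ) (q : k) (N : ℕ) (μ : ℕ → ℕ → k) :
    ∀ d a b, a < b → b - a ≤ d →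
    uElt g q N (fun a b => if (∏ t ∈ Finset.Ico a b, g t) ^ N = 1 then 0
      else nuF g q N μ a b) a b = uElt g q N μ a b := by
  intro d
  induction d with
  | zero => intro a b h1 h2; omega
  | succ d ih =>
    intro a b hab hd
    rw [uElt_def, star g q N μ (b - a) a b hab le_rfl]
    congr 1
    · -- heads
      by_cases hG : (∏ t ∈ Finset.Ico a b, g t) ^ N = 1
      · rw [hG, map_one, sub_self, smul_zero, smul_zero]
      · rw [if_neg hG]
    · apply Finset.sum_congr rfl
      intro p hp
      obtain ⟨hap, hpb⟩ := Finset.mem_Ioo.mp hp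
      rw [ih p b hpb (by omega)]
      by_cases hG : (∏ t ∈ Finset.Ico a p, g t) ^ N = 1
      · rw [if_pos hG, if_pos hG, mul_zero, zero_smul]
      · rw [if_neg hG, if_neg hG]

lemma nu_vanish (g : ℕ → Γ) (q : k) (N : ℕ) (μ : ℕ → ℕ → k) (n : ℕ)
    (χ : ℕ → Γ →* kˣ)
    (hμ : ∀ a b, 1 ≤ a → a < b → b ≤ n + 1 →
      (∏ t ∈ Finset.Ico a b, χ t) ^ N ≠ 1 → μ a b = 0) :
    ∀ d a b, 1 ≤ a → a < b → b ≤ n + 1 → b - a ≤ d →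
      (∏ t ∈ Finset.Ico a b, χ t) ^ N ≠ 1 → nuF g q N μ a b = 0 := by
  intro d
  induction d with
  | zero => intro a b h1 h2 h3 h4; omega
  | succ d ih =>
    intro a b h1 hab h3 hd hχ
    rw [nuF_def, hμ a b h1 hab h3 hχ, zero_add]
    apply Finset.sum_eq_zero
    intro p hp
    obtain ⟨hap, hpb⟩ := Finset.mem_Ioo.mp hp
    by_cases hG : (∏ t ∈ Finset.Ico a p, g t) ^ N = 1
    · rw [if_pos hG]
      by_cases hc : (∏ t ∈ Finset.Ico a p, χ t) ^ N = 1
      · have hχp : (∏ t ∈ Finset.Ico p b, χ t) ^ N ≠ 1 := by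
          intro hc2
          apply hχ
          rw [Gmul χ N (le_of_lt hap) (le_of_lt hpb), hc, hc2]
          exact one_mul (1 : Γ →* kˣ)
        rw [ih p b (by omega) hpb h3 (by omega) hχp, mul_zero]
      · rw [hμ a p h1 hap (by omega) hc, mul_zero, zero_mul]
    · rw [if_neg hG]

end Aux

/-- **normalization.**  Let `𝒟` be a Cartan datum of type `A_n` over
a finite abelian group `Γ` and `μ ∈ k^{Φ⁺}` arbitrary.  There is exactly one family
`μ'` satisfying (R1) (`μ'_{ij} = 0` whenever `g_{ij}^N = 1`) with
`u_{ij}(μ) = u_{ij}(μ')` for all `1 ≤ i < j ≤ n+1`; moreover if `μ` satisfies (R2)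
then so does `μ'`. -/
theorem stmt_14 {k : Type*} [Field k] {Γ : Type*} [CommGroup Γ] [Fintype Γ]
    (n N : ℕ) (hn : 2 ≤ n) (hNodd : Odd N) (hN1 : 1 < N)
    (q : k) (hq : IsPrimitiveRoot q N)
    (g : ℕ → Γ) (χ : ℕ → Γ →* kˣ)
    (hdiag : ∀ l, 1 ≤ l → l ≤ n → ((χ l) (g l) : k) = q)
    (hC1 : ∀ a b, 1 ≤ a → a ≤ n → 1 ≤ b → b ≤ n → (a + 1 = b ∨ b + 1 = a) →
      ((χ b) (g a) : k) * ((χ a) (g b) : k) = q⁻¹)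
    (hC2 : ∀ a b, 1 ≤ a → a ≤ n → 1 ≤ b → b ≤ n → (a + 2 ≤ b ∨ b + 2 ≤ a) →
      ((χ b) (g a) : k) * ((χ a) (g b) : k) = 1)
    (μ : ℕ → ℕ → k) :
    ∃ μ' : ℕ → ℕ → k,
      (∀ a b, 1 ≤ a → a < b → b ≤ n + 1 →
        (∏ t ∈ Finset.Ico a b, g t) ^ N = 1 → μ' a b = 0) ∧
      (∀ a b, 1 ≤ a → a < b → b ≤ n + 1 → uElt g q N μ a b = uElt g q N μ' a b) ∧
      ((∀ a b, 1 ≤ a → a < b → b ≤ n + 1 →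
          (∏ t ∈ Finset.Ico a b, χ t) ^ N ≠ 1 → μ a b = 0) →
        (∀ a b, 1 ≤ a → a < b → b ≤ n + 1 →
          (∏ t ∈ Finset.Ico a b, χ t) ^ N ≠ 1 → μ' a b = 0)) ∧
      (∀ μ'' : ℕ → ℕ → k,
        (∀ a b, 1 ≤ a → a < b → b ≤ n + 1 →
          (∏ t ∈ Finset.Ico a b, g t) ^ N = 1 → μ'' a b = 0) →
        (∀ a b, 1 ≤ a → a < b → b ≤ n + 1 → uElt g q N μ a b = uElt g q N μ'' a b) →
        ∀ a b, 1 ≤ a → a < b → b ≤ n + 1 → μ'' a b = μ' a b) := by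
  refine ⟨fun a b => if (∏ t ∈ Finset.Ico a b, g t) ^ N = 1 then 0
    else nuF g q N μ a b, ?_, ?_, ?_, ?_⟩
  · intro a b _ _ _ hG
    simp only
    rw [if_pos hG]
  · intro a b h1 hab h3
    exact (u_eq g q N μ (b - a) a b hab le_rfl).symm
  · intro hμ a b h1 hab h3 hχ
    simp only
    by_cases hG : (∏ t ∈ Finset.Ico a b, g t) ^ N = 1
    · rw [if_pos hG]
    · rw [if_neg hG]
      exact nu_vanish g q N μ n χ hμ (b - a) a b h1 hab h3 le_rfl hχ
  · intro μ'' hR1 hu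
    have main : ∀ d a b, 1 ≤ a → a < b → b ≤ n + 1 → b - a ≤ d →
        μ'' a b = if (∏ t ∈ Finset.Ico a b, g t) ^ N = 1 then 0
          else nuF g q N μ a b := by
      intro d
      induction d with
      | zero => intro a b h1 h2 h3 h4; omega
      | succ d ih =>
        intro a b h1 hab h3 hd
        have he : uElt g q N μ'' a b
            = uElt g q N (fun a b => if (∏ t ∈ Finset.Ico a b, g t) ^ N = 1 then 0
                else nuF g q N μ a b) a b :=
          (hu a b h1 hab h3).symm.trans (u_eq g q N μ (b - a) a b hab le_rfl).symm
        rw [uElt_def, uElt_def] at he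
        have hs : (∑ p ∈ Finset.Ioo a b, ((q - 1) ^ N * μ'' a p) • uElt g q N μ'' p b)
            = ∑ p ∈ Finset.Ioo a b,
                ((q - 1) ^ N * (fun a b => if (∏ t ∈ Finset.Ico a b, g t) ^ N = 1
                    then 0 else nuF g q N μ a b) a p) •
                  uElt g q N (fun a b => if (∏ t ∈ Finset.Ico a b, g t) ^ N = 1
                    then 0 else nuF g q N μ a b) p b := by
          apply Finset.sum_congr rfl
          intro p hp
          obtain ⟨hap, hpb⟩ := Finset.mem_Ioo.mp hp
          have e1 : μ'' a p = _ := ih a p h1 hap (by omega) (by omega)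
          have e2 : uElt g q N μ'' p b
              = uElt g q N (fun a b => if (∏ t ∈ Finset.Ico a b, g t) ^ N = 1 then 0
                  else nuF g q N μ a b) p b :=
            (hu p b (by omega) hpb h3).symm.trans
              (u_eq g q N μ (b - p) p b hpb le_rfl).symm
          rw [e1, e2]
        rw [hs] at he
        have hc := add_right_cancel he
        by_cases hG : (∏ t ∈ Finset.Ico a b, g t) ^ N = 1
        · rw [if_pos hG]
          exact hR1 a b h1 hab h3 hG
        · rw [if_neg hG]
          simp only [if_neg hG] at hc
          have hz : (μ'' a b - nuF g q N μ a b) •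
              ((1 : MonoidAlgebra k Γ)
                - MonoidAlgebra.of k Γ ((∏ t ∈ Finset.Ico a b, g t) ^ N)) = 0 := by
            rw [sub_smul, hc, sub_self]
          rcases smul_eq_zero.mp hz with h | h
          · exact sub_eq_zero.mp h
          · exact absurd h (one_sub_of_ne hG)
    intro a b h1 hab h3
    exact main (b - a) a b h1 hab h3 le_rfl
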